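/- Let (A, ρ, s) be a minimal quantum algebra over a field k. If (A, ρ, t_d, t_u) is an oriented quantum algebra over k, then t_d ∘ t_u = s⁻². -/
import Mathlib


open TensorProduct

noncomputable section

variable (k : Type*) [Field k] (A : Type*) [Ring A] [Algebra k A]

/-- The linear map `A ⊗ A → A ⊗ Aᵐᵒᵖ` used to interpret elements in `A ⊗ Aᵒᵖ`. -/
def toOpTensor : A ⊗[k] A →ₗ[k] A ⊗[k] Aᵐᵒᵖ :=
  TensorProduct.map LinearMap.id (MulOpposite.opLinearEquiv k).toLinearMap

/-- `ρ ↦ ρ₁₂` in `A ⊗ (A ⊗ A)`. -/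
def rho12 : A ⊗[k] A →ₐ[k] A ⊗[k] (A ⊗[k] A) :=
  Algebra.TensorProduct.map (AlgHom.id k A) Algebra.TensorProduct.includeLeft

/-- `ρ ↦ ρ₁₃`. -/
def rho13 : A ⊗[k] A →ₐ[k] A ⊗[k] (A ⊗[k] A) :=
  Algebra.TensorProduct.map (AlgHom.id k A) Algebra.TensorProduct.includeRight

/-- `ρ ↦ ρ₂₃`. -/
def rho23 : A ⊗[k] A →ₐ[k] A ⊗[k] (A ⊗[k] A) :=
  Algebra.TensorProduct.includeRight

/-- The quantum Yang–Baxter equation. -/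
def YangBaxter (ρ : A ⊗[k] A) : Prop :=
  rho12 k A ρ * rho13 k A ρ * rho23 k A ρ = rho23 k A ρ * rho13 k A ρ * rho12 k A ρ

/-- An oriented quantum algebra structure `(A, ρ, t_d, t_u)` (with `ρinv` the inverse of `ρ`). -/
structure OrientedQA (ρ ρinv : A ⊗[k] A) (td tu : A →ₗ[k] A) : Prop where
  td_bij : Function.Bijective td
  tu_bij : Function.Bijective tu
  td_one : td 1 = 1
  td_mul : ∀ a b : A, td (a * b) = td a * td b
  tu_one : tu 1 = 1
  tu_mul : ∀ a b : A, tu (a * b) = tu a * tu b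
  comm : ∀ a : A, td (tu a) = tu (td a)
  mul_inv : ρ * ρinv = 1
  inv_mul : ρinv * ρ = 1
  qa1_left : toOpTensor k A (TensorProduct.map LinearMap.id tu ρ) *
      toOpTensor k A (TensorProduct.map td LinearMap.id ρinv) = 1
  qa1_right : toOpTensor k A (TensorProduct.map td LinearMap.id ρinv) *
      toOpTensor k A (TensorProduct.map LinearMap.id tu ρ) = 1
  qa2_d : TensorProduct.map td td ρ = ρ
  qa2_u : TensorProduct.map tu tu ρ = ρ
  qa3 : YangBaxter k A ρ

/-- Left contraction `(u* ⊗ 1)(ρ)`. -/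
def contractL (f : Module.Dual k A) : A ⊗[k] A →ₗ[k] A :=
  (TensorProduct.lid k A).toLinearMap ∘ₗ TensorProduct.map f LinearMap.id

/-- Right contraction `(1 ⊗ v*)(ρ)`. -/
def contractR (g : Module.Dual k A) : A ⊗[k] A →ₗ[k] A :=
  (TensorProduct.rid k A).toLinearMap ∘ₗ TensorProduct.map LinearMap.id g

/-- The set `A_(ρ)` of all `(u* ⊗ 1)(ρ) + (1 ⊗ v*)(ρ)`. -/
def contractSet (ρ : A ⊗[k] A) : Set A :=
  {x | ∃ f g : Module.Dual k A, x = contractL k A f ρ + contractR k A g ρ}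

/-- A quantum algebra `(A, ρ, s)`, with `s` an algebra anti-automorphism. -/
structure QuantumAlgebra (ρ ρinv : A ⊗[k] A) (s : A ≃ₗ[k] A) : Prop where
  s_one : s 1 = 1
  s_anti : ∀ a b : A, s (a * b) = s b * s a
  mul_inv : ρ * ρinv = 1
  inv_mul : ρinv * ρ = 1
  QA1 : ρinv = TensorProduct.map s.toLinearMap LinearMap.id ρ
  QA2 : TensorProduct.map s.toLinearMap s.toLinearMap ρ = ρ
  QA3 : YangBaxter k A ρ

end


section Helpers

open TensorProduct

variable {k : Type*} [Field k] {A : Type*} [Ring A] [Algebra k A]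

lemma map_map_apply (F₂ G₂ F₁ G₁ : A →ₗ[k] A) (x : A ⊗[k] A) :
    TensorProduct.map F₂ G₂ (TensorProduct.map F₁ G₁ x) =
      TensorProduct.map (F₂ ∘ₗ F₁) (G₂ ∘ₗ G₁) x := by
  rw [TensorProduct.map_comp]; rfl

lemma contractL_tmul (f : Module.Dual k A) (a b : A) :
    contractL k A f (a ⊗ₜ[k] b) = f a • b := by
  simp [contractL]

lemma contractR_tmul (g : Module.Dual k A) (a b : A) :
    contractR k A g (a ⊗ₜ[k] b) = g b • a := by
  simp [contractR]

lemma contractL_map_right (f : Module.Dual k A) (F : A →ₗ[k] A) (x : A ⊗[k] A) :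
    contractL k A f (TensorProduct.map LinearMap.id F x) = F (contractL k A f x) := by
  induction x using TensorProduct.induction_on with
  | zero => simp
  | tmul a b => simp [contractL_tmul]
  | add x y hx hy => simp [map_add, hx, hy]

lemma contractL_map_left (f : Module.Dual k A) (F : A →ₗ[k] A) (x : A ⊗[k] A) :
    contractL k A f (TensorProduct.map F LinearMap.id x) = contractL k A (f ∘ₗ F) x := by
  induction x using TensorProduct.induction_on with
  | zero => simp
  | tmul a b => simp [contractL_tmul]
  | add x y hx hy => simp [map_add, hx, hy]

lemma contractR_map_left (g : Module.Dual k A) (F : A →ₗ[k] A) (x : A ⊗[k] A) :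
    contractR k A g (TensorProduct.map F LinearMap.id x) = F (contractR k A g x) := by
  induction x using TensorProduct.induction_on with
  | zero => simp
  | tmul a b => simp [contractR_tmul]
  | add x y hx hy => simp [map_add, hx, hy]

lemma contractR_map_right (g : Module.Dual k A) (F : A →ₗ[k] A) (x : A ⊗[k] A) :
    contractR k A g (TensorProduct.map LinearMap.id F x) = contractR k A (g ∘ₗ F) x := by
  induction x using TensorProduct.induction_on with
  | zero => simp
  | tmul a b => simp [contractR_tmul]
  | add x y hx hy => simp [map_add, hx, hy]


lemma swap_one (ρ : A ⊗[k] A) (F F' : A →ₗ[k] A) (h1 : F' ∘ₗ F = LinearMap.id)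
    (hfix : TensorProduct.map F F ρ = ρ) :
    TensorProduct.map F LinearMap.id ρ = TensorProduct.map LinearMap.id F' ρ := by
  conv_rhs => rw [← hfix]
  rw [map_map_apply, h1, LinearMap.id_comp]

lemma swap_fix (ρ : A ⊗[k] A) (F F' : A →ₗ[k] A) (h1 : F' ∘ₗ F = LinearMap.id)
    (hfix : TensorProduct.map F F ρ = ρ) :
    TensorProduct.map F' F' ρ = ρ := by
  conv_lhs => rw [← hfix]
  rw [map_map_apply, h1, TensorProduct.map_id, LinearMap.id_apply]

lemma push_right (ρ : A ⊗[k] A) (F G₂ G₁ H : A →ₗ[k] A)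
    (hsw : TensorProduct.map LinearMap.id G₁ ρ = TensorProduct.map H LinearMap.id ρ) :
    TensorProduct.map F (G₂ ∘ₗ G₁) ρ = TensorProduct.map (F ∘ₗ H) G₂ ρ := by
  have e1 : TensorProduct.map F (G₂ ∘ₗ G₁) ρ
      = TensorProduct.map F G₂ (TensorProduct.map LinearMap.id G₁ ρ) := by
    rw [map_map_apply, LinearMap.comp_id]
  have e2 : TensorProduct.map F G₂ (TensorProduct.map H LinearMap.id ρ)
      = TensorProduct.map (F ∘ₗ H) G₂ ρ := by
    rw [map_map_apply, LinearMap.comp_id]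
  rw [e1, hsw, e2]

lemma push_right' (ρ : A ⊗[k] A) (F G H : A →ₗ[k] A)
    (hsw : TensorProduct.map LinearMap.id G ρ = TensorProduct.map H LinearMap.id ρ) :
    TensorProduct.map F G ρ = TensorProduct.map (F ∘ₗ H) LinearMap.id ρ := by
  have := push_right ρ F LinearMap.id G H hsw
  rwa [LinearMap.id_comp] at this

lemma push_left (ρ : A ⊗[k] A) (F₂ F₁ G H : A →ₗ[k] A)
    (hsw : TensorProduct.map F₁ LinearMap.id ρ = TensorProduct.map LinearMap.id H ρ) :
    TensorProduct.map (F₂ ∘ₗ F₁) G ρ = TensorProduct.map F₂ (G ∘ₗ H) ρ := by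
  have e1 : TensorProduct.map (F₂ ∘ₗ F₁) G ρ
      = TensorProduct.map F₂ G (TensorProduct.map F₁ LinearMap.id ρ) := by
    rw [map_map_apply, LinearMap.comp_id]
  have e2 : TensorProduct.map F₂ G (TensorProduct.map LinearMap.id H ρ)
      = TensorProduct.map F₂ (G ∘ₗ H) ρ := by
    rw [map_map_apply, LinearMap.comp_id]
  rw [e1, hsw, e2]

lemma push_left' (ρ : A ⊗[k] A) (F G H : A →ₗ[k] A)
    (hsw : TensorProduct.map F LinearMap.id ρ = TensorProduct.map LinearMap.id H ρ) :
    TensorProduct.map F G ρ = TensorProduct.map LinearMap.id (G ∘ₗ H) ρ := by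
  have := push_left ρ LinearMap.id F G H hsw
  rwa [LinearMap.id_comp] at this

end Helpers

set_option maxHeartbeats 2000000 in
open TensorProduct in
/-- if `(A, ρ, s)` is a minimal quantum algebra and `(A, ρ, t_d, t_u)` is
an oriented quantum algebra, then `t_d ∘ t_u = s⁻²`. -/
theorem comp_eq_antipode_sq_inv {k : Type*} [Field k]
    {A : Type*} [Ring A] [Algebra k A]
    (ρ ρinv : A ⊗[k] A) (s : A ≃ₗ[k] A)
    (h : QuantumAlgebra k A ρ ρinv s)
    (hmin : Algebra.adjoin k (contractSet k A ρ) = ⊤)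
    (td tu : A →ₗ[k] A)
    (ht : OrientedQA k A ρ ρinv td tu) :
    td ∘ₗ tu = (s.symm.trans s.symm).toLinearMap := by
  classical
  -- shorthand
  have s_symm_one : s.symm (1 : A) = 1 := by
    apply s.injective; rw [LinearEquiv.apply_symm_apply, h.s_one]
  have s_symm_anti : ∀ x y : A, s.symm (x * y) = s.symm y * s.symm x := by
    intro x y; apply s.injective
    rw [h.s_anti, LinearEquiv.apply_symm_apply, LinearEquiv.apply_symm_apply,
      LinearEquiv.apply_symm_apply]
  have ES : s.symm.toLinearMap ∘ₗ s.toLinearMap = LinearMap.id := by ext a; simp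
  have SE : s.toLinearMap ∘ₗ s.symm.toLinearMap = LinearMap.id := by ext a; simp
  set Td : A ≃ₗ[k] A := LinearEquiv.ofBijective td ht.td_bij with hTddef
  set Tu : A ≃ₗ[k] A := LinearEquiv.ofBijective tu ht.tu_bij with hTudef
  have hTd : ∀ a, Td a = td a := fun a => rfl
  have hTu : ∀ a, Tu a = tu a := fun a => rfl
  have DTd : Td.symm.toLinearMap ∘ₗ td = LinearMap.id := by
    ext a; simp only [LinearMap.comp_apply, LinearMap.id_apply, LinearEquiv.coe_coe]
    rw [← hTd a, Td.symm_apply_apply]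
  have TdD : td ∘ₗ Td.symm.toLinearMap = LinearMap.id := by
    ext a; simp only [LinearMap.comp_apply, LinearMap.id_apply, LinearEquiv.coe_coe]
    rw [← hTd (Td.symm a), Td.apply_symm_apply]
  have UTu : Tu.symm.toLinearMap ∘ₗ tu = LinearMap.id := by
    ext a; simp only [LinearMap.comp_apply, LinearMap.id_apply, LinearEquiv.coe_coe]
    rw [← hTu a, Tu.symm_apply_apply]
  have TuU : tu ∘ₗ Tu.symm.toLinearMap = LinearMap.id := by
    ext a; simp only [LinearMap.comp_apply, LinearMap.id_apply, LinearEquiv.coe_coe]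
    rw [← hTu (Tu.symm a), Tu.apply_symm_apply]
  -- fixed identities
  have fixS : TensorProduct.map s.toLinearMap s.toLinearMap ρ = ρ := h.QA2
  have fixE : TensorProduct.map s.symm.toLinearMap s.symm.toLinearMap ρ = ρ :=
    swap_fix ρ _ _ ES fixS
  -- swaps
  have swS : TensorProduct.map s.toLinearMap LinearMap.id ρ
      = TensorProduct.map LinearMap.id s.symm.toLinearMap ρ := swap_one ρ _ _ ES fixS
  have swE : TensorProduct.map s.symm.toLinearMap LinearMap.id ρ
      = TensorProduct.map LinearMap.id s.toLinearMap ρ := swap_one ρ _ _ SE fixE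
  have fixD : TensorProduct.map Td.symm.toLinearMap Td.symm.toLinearMap ρ = ρ :=
    swap_fix ρ _ _ DTd ht.qa2_d
  have fixU : TensorProduct.map Tu.symm.toLinearMap Tu.symm.toLinearMap ρ = ρ :=
    swap_fix ρ _ _ UTu ht.qa2_u
  have swTd : TensorProduct.map td LinearMap.id ρ
      = TensorProduct.map LinearMap.id Td.symm.toLinearMap ρ := swap_one ρ _ _ DTd ht.qa2_d
  have swD : TensorProduct.map Td.symm.toLinearMap LinearMap.id ρ
      = TensorProduct.map LinearMap.id td ρ := swap_one ρ _ _ TdD fixD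
  have swTu : TensorProduct.map tu LinearMap.id ρ
      = TensorProduct.map LinearMap.id Tu.symm.toLinearMap ρ := swap_one ρ _ _ UTu ht.qa2_u
  have swU : TensorProduct.map Tu.symm.toLinearMap LinearMap.id ρ
      = TensorProduct.map LinearMap.id tu ρ := swap_one ρ _ _ TuU fixU
  -- the inverse in second-slot form
  have hrinv : ρinv = TensorProduct.map LinearMap.id s.symm.toLinearMap ρ := by
    rw [h.QA1, swS]
  -- the algebra equivalence χ : A ⊗ A ≃ A ⊗ Aᵐᵒᵖ,  a ⊗ b ↦ a ⊗ op (s b)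
  set Ω : A ≃ₐ[k] Aᵐᵒᵖ := AlgEquiv.ofLinearEquiv (s.trans (MulOpposite.opLinearEquiv k))
      (by rw [LinearEquiv.trans_apply, h.s_one]; rfl)
      (by intro x y
          rw [LinearEquiv.trans_apply, LinearEquiv.trans_apply, LinearEquiv.trans_apply,
            h.s_anti]
          exact MulOpposite.op_mul (s y) (s x) ▸ rfl) with hΩdef
  have hΩ : ∀ a : A, Ω a = MulOpposite.op (s a) := fun a => rfl
  set χ : (A ⊗[k] A) ≃ₐ[k] (A ⊗[k] Aᵐᵒᵖ) :=
    Algebra.TensorProduct.congr (AlgEquiv.refl (R := k) (A₁ := A)) Ω with hχdef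
  have chi_eq : ∀ x : A ⊗[k] A,
      χ x = toOpTensor k A (TensorProduct.map LinearMap.id s.toLinearMap x) := by
    intro x
    induction x using TensorProduct.induction_on with
    | zero => simp
    | tmul a b =>
      simp [hχdef, toOpTensor, hΩ]
    | add x y hx hy => simp only [map_add, hx, hy]
  have hu : χ (TensorProduct.map LinearMap.id (s.symm.toLinearMap ∘ₗ tu) ρ)
      = toOpTensor k A (TensorProduct.map LinearMap.id tu ρ) := by
    rw [chi_eq, map_map_apply, LinearMap.id_comp, ← LinearMap.comp_assoc, SE,
      LinearMap.id_comp]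
  have hv : χ (TensorProduct.map td s.symm.toLinearMap ρinv)
      = toOpTensor k A (TensorProduct.map td LinearMap.id ρinv) := by
    rw [chi_eq, map_map_apply, LinearMap.id_comp, SE]
  have huv : TensorProduct.map LinearMap.id (s.symm.toLinearMap ∘ₗ tu) ρ *
      TensorProduct.map td s.symm.toLinearMap ρinv = 1 := by
    apply χ.injective
    rw [map_mul, map_one, hu, hv]
    exact ht.qa1_left
  have hvu : TensorProduct.map td s.symm.toLinearMap ρinv *
      TensorProduct.map LinearMap.id (s.symm.toLinearMap ∘ₗ tu) ρ = 1 := by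
    apply χ.injective
    rw [map_mul, map_one, hu, hv]
    exact ht.qa1_right
  -- Θ = id ⊗ (s⁻¹ ∘ tu ∘ s)  and  Θ' = td ⊗ s⁻²,  algebra automorphisms
  set G1 : A ≃ₐ[k] A := AlgEquiv.ofLinearEquiv (s.trans (Tu.trans s.symm))
      (by rw [LinearEquiv.trans_apply, LinearEquiv.trans_apply, h.s_one, hTu, ht.tu_one,
            s_symm_one])
      (by intro x y
          simp only [LinearEquiv.trans_apply, hTu]
          rw [h.s_anti, ht.tu_mul, s_symm_anti]) with hG1def
  have hG1 : ∀ a, G1 a = s.symm (tu (s a)) := fun a => rfl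
  set Θ : (A ⊗[k] A) ≃ₐ[k] (A ⊗[k] A) :=
    Algebra.TensorProduct.congr (AlgEquiv.refl (R := k) (A₁ := A)) G1 with hΘdef
  have theta_eq : ∀ x : A ⊗[k] A, Θ x = TensorProduct.map LinearMap.id
      ((s.symm.toLinearMap ∘ₗ tu) ∘ₗ s.toLinearMap) x := by
    intro x
    induction x using TensorProduct.induction_on with
    | zero => simp
    | tmul a b => simp [hΘdef, hG1]
    | add x y hx hy => simp only [map_add, hx, hy]
  set TdA : A ≃ₐ[k] A := AlgEquiv.ofLinearEquiv Td (by rw [hTd, ht.td_one])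
      (by intro x y; rw [hTd, hTd, hTd, ht.td_mul]) with hTdAdef
  have hTdA : ∀ a, TdA a = td a := fun a => rfl
  set E2 : A ≃ₐ[k] A := AlgEquiv.ofLinearEquiv (s.symm.trans s.symm)
      (by rw [LinearEquiv.trans_apply, s_symm_one, s_symm_one])
      (by intro x y
          simp only [LinearEquiv.trans_apply]
          rw [s_symm_anti, s_symm_anti]) with hE2def
  have hE2 : ∀ a, E2 a = s.symm (s.symm a) := fun a => rfl
  set Θ' : (A ⊗[k] A) ≃ₐ[k] (A ⊗[k] A) := Algebra.TensorProduct.congr TdA E2 with hΘ'def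
  have theta'_eq : ∀ x : A ⊗[k] A, Θ' x = TensorProduct.map td
      (s.symm.toLinearMap ∘ₗ s.symm.toLinearMap) x := by
    intro x
    induction x using TensorProduct.induction_on with
    | zero => simp
    | tmul a b => simp [hΘ'def, hTdA, hE2]
    | add x y hx hy => simp only [map_add, hx, hy]
  have hu_theta : Θ ρinv = TensorProduct.map LinearMap.id (s.symm.toLinearMap ∘ₗ tu) ρ := by
    rw [hrinv, theta_eq, map_map_apply, LinearMap.id_comp, LinearMap.comp_assoc, SE,
      LinearMap.comp_id]
  have hv_theta' : Θ' ρ = TensorProduct.map td s.symm.toLinearMap ρinv := by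
    rw [theta'_eq, hrinv, map_map_apply, LinearMap.comp_id]
  have hΘmul : Θ ρ * Θ ρinv = 1 := by rw [← map_mul, h.mul_inv, map_one]
  have hΘ'mul : Θ' ρinv * Θ' ρ = 1 := by rw [← map_mul, h.inv_mul, map_one]
  -- master equations
  have M1 : TensorProduct.map LinearMap.id ((s.symm.toLinearMap ∘ₗ tu) ∘ₗ s.toLinearMap) ρ
      = TensorProduct.map td (s.symm.toLinearMap ∘ₗ s.symm.toLinearMap) ρ := by
    have e1 : Θ ρ = TensorProduct.map td s.symm.toLinearMap ρinv := by
      calc Θ ρ = Θ ρ * (TensorProduct.map LinearMap.id (s.symm.toLinearMap ∘ₗ tu) ρ *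
            TensorProduct.map td s.symm.toLinearMap ρinv) := by rw [huv, mul_one]
        _ = (Θ ρ * Θ ρinv) * TensorProduct.map td s.symm.toLinearMap ρinv := by
            rw [← hu_theta, mul_assoc]
        _ = TensorProduct.map td s.symm.toLinearMap ρinv := by rw [hΘmul, one_mul]
    rw [← theta_eq, e1, ← hv_theta', theta'_eq]
  have M2 : TensorProduct.map LinearMap.id (s.symm.toLinearMap ∘ₗ tu) ρ
      = TensorProduct.map td ((s.symm.toLinearMap ∘ₗ s.symm.toLinearMap) ∘ₗ
          s.symm.toLinearMap) ρ := by
    have e1 : Θ' ρinv = TensorProduct.map LinearMap.id (s.symm.toLinearMap ∘ₗ tu) ρ := by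
      calc Θ' ρinv = Θ' ρinv * (TensorProduct.map td s.symm.toLinearMap ρinv *
            TensorProduct.map LinearMap.id (s.symm.toLinearMap ∘ₗ tu) ρ) := by
            rw [hvu, mul_one]
        _ = (Θ' ρinv * Θ' ρ) * TensorProduct.map LinearMap.id (s.symm.toLinearMap ∘ₗ tu) ρ
            := by rw [← hv_theta', mul_assoc]
        _ = _ := by rw [hΘ'mul, one_mul]
    have e2 : Θ' ρinv = TensorProduct.map td ((s.symm.toLinearMap ∘ₗ s.symm.toLinearMap) ∘ₗ
        s.symm.toLinearMap) ρ := by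
      rw [theta'_eq, hrinv, map_map_apply, LinearMap.comp_id]
    rw [← e1, e2]
  -- cancellation helpers for Td, Tu
  have tdD : ∀ a : A, td (Td.symm a) = a := by
    intro a; rw [← hTd]; exact Td.apply_symm_apply a
  have tuU : ∀ a : A, Tu.symm (tu a) = a := by
    intro a; rw [← hTu]; exact Tu.symm_apply_apply a
  -- second-slot (L) element identities
  have L1 : TensorProduct.map LinearMap.id ((s.symm.toLinearMap ∘ₗ tu) ∘ₗ s.toLinearMap) ρ
      = TensorProduct.map LinearMap.id
        ((s.symm.toLinearMap ∘ₗ s.symm.toLinearMap) ∘ₗ Td.symm.toLinearMap) ρ := by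
    rw [M1]; exact push_left' ρ td _ _ swTd
  have L2 : TensorProduct.map LinearMap.id (s.symm.toLinearMap ∘ₗ tu) ρ
      = TensorProduct.map LinearMap.id
        (((s.symm.toLinearMap ∘ₗ s.symm.toLinearMap) ∘ₗ s.symm.toLinearMap)
          ∘ₗ Td.symm.toLinearMap) ρ := by
    rw [M2]; exact push_left' ρ td _ _ swTd
  -- first-slot (R) element identities
  have Q1el : TensorProduct.map ((s.symm.toLinearMap ∘ₗ Tu.symm.toLinearMap) ∘ₗ s.toLinearMap)
      LinearMap.id ρ
      = TensorProduct.map ((td ∘ₗ s.toLinearMap) ∘ₗ s.toLinearMap) LinearMap.id ρ := by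
    have c1 : TensorProduct.map LinearMap.id ((s.symm.toLinearMap ∘ₗ tu) ∘ₗ s.toLinearMap) ρ
        = TensorProduct.map s.symm.toLinearMap (s.symm.toLinearMap ∘ₗ tu) ρ := by
      have := push_right ρ LinearMap.id (s.symm.toLinearMap ∘ₗ tu) s.toLinearMap
        s.symm.toLinearMap swE.symm
      rwa [LinearMap.id_comp] at this
    have c2 : TensorProduct.map s.symm.toLinearMap (s.symm.toLinearMap ∘ₗ tu) ρ
        = TensorProduct.map (s.symm.toLinearMap ∘ₗ Tu.symm.toLinearMap) s.symm.toLinearMap ρ :=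
      push_right ρ _ _ _ _ swU.symm
    have c3 : TensorProduct.map (s.symm.toLinearMap ∘ₗ Tu.symm.toLinearMap) s.symm.toLinearMap ρ
        = TensorProduct.map ((s.symm.toLinearMap ∘ₗ Tu.symm.toLinearMap) ∘ₗ s.toLinearMap)
          LinearMap.id ρ :=
      push_right' ρ _ _ _ swS.symm
    have d1 : TensorProduct.map td (s.symm.toLinearMap ∘ₗ s.symm.toLinearMap) ρ
        = TensorProduct.map (td ∘ₗ s.toLinearMap) s.symm.toLinearMap ρ :=
      push_right ρ _ _ _ _ swS.symm
    have d2 : TensorProduct.map (td ∘ₗ s.toLinearMap) s.symm.toLinearMap ρ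
        = TensorProduct.map ((td ∘ₗ s.toLinearMap) ∘ₗ s.toLinearMap) LinearMap.id ρ :=
      push_right' ρ _ _ _ swS.symm
    rw [← c3, ← c2, ← c1, M1, d1, d2]
  have Q2el : TensorProduct.map (Tu.symm.toLinearMap ∘ₗ s.toLinearMap) LinearMap.id ρ
      = TensorProduct.map (((td ∘ₗ s.toLinearMap) ∘ₗ s.toLinearMap) ∘ₗ s.toLinearMap)
        LinearMap.id ρ := by
    have c1 : TensorProduct.map LinearMap.id (s.symm.toLinearMap ∘ₗ tu) ρ
        = TensorProduct.map Tu.symm.toLinearMap s.symm.toLinearMap ρ := by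
      have := push_right ρ LinearMap.id s.symm.toLinearMap tu Tu.symm.toLinearMap swU.symm
      rwa [LinearMap.id_comp] at this
    have c2 : TensorProduct.map Tu.symm.toLinearMap s.symm.toLinearMap ρ
        = TensorProduct.map (Tu.symm.toLinearMap ∘ₗ s.toLinearMap) LinearMap.id ρ :=
      push_right' ρ _ _ _ swS.symm
    have d1 : TensorProduct.map td
        ((s.symm.toLinearMap ∘ₗ s.symm.toLinearMap) ∘ₗ s.symm.toLinearMap) ρ
        = TensorProduct.map (td ∘ₗ s.toLinearMap)
          (s.symm.toLinearMap ∘ₗ s.symm.toLinearMap) ρ :=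
      push_right ρ _ _ _ _ swS.symm
    have d2 : TensorProduct.map (td ∘ₗ s.toLinearMap)
        (s.symm.toLinearMap ∘ₗ s.symm.toLinearMap) ρ
        = TensorProduct.map ((td ∘ₗ s.toLinearMap) ∘ₗ s.toLinearMap) s.symm.toLinearMap ρ :=
      push_right ρ _ _ _ _ swS.symm
    have d3 : TensorProduct.map ((td ∘ₗ s.toLinearMap) ∘ₗ s.toLinearMap) s.symm.toLinearMap ρ
        = TensorProduct.map (((td ∘ₗ s.toLinearMap) ∘ₗ s.toLinearMap) ∘ₗ s.toLinearMap)
          LinearMap.id ρ :=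
      push_right' ρ _ _ _ swS.symm
    rw [← c2, ← c1, M2, d1, d2, d3]
  -- pointwise consequences on left contractions
  have P1 : ∀ f : Module.Dual k A,
      tu (s (contractL k A f ρ)) = s.symm (Td.symm (contractL k A f ρ)) := by
    intro f
    have h1 := congrArg (contractL k A f) L1
    rw [contractL_map_right, contractL_map_right] at h1
    simp only [LinearMap.comp_apply, LinearEquiv.coe_coe] at h1
    exact s.symm.injective h1
  have P2 : ∀ f : Module.Dual k A,
      tu (contractL k A f ρ) = s.symm (s.symm (Td.symm (contractL k A f ρ))) := by
    intro f
    have h1 := congrArg (contractL k A f) L2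
    rw [contractL_map_right, contractL_map_right] at h1
    simp only [LinearMap.comp_apply, LinearEquiv.coe_coe] at h1
    exact s.symm.injective h1
  -- pointwise consequences on right contractions
  have Q1 : ∀ g : Module.Dual k A,
      s.symm (Tu.symm (s (contractR k A g ρ))) = td (s (s (contractR k A g ρ))) := by
    intro g
    have h1 := congrArg (contractR k A g) Q1el
    rw [contractR_map_left, contractR_map_left] at h1
    simpa only [LinearMap.comp_apply, LinearEquiv.coe_coe] using h1
  have Q2 : ∀ g : Module.Dual k A,
      Tu.symm (s (contractR k A g ρ)) = td (s (s (s (contractR k A g ρ)))) := by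
    intro g
    have h1 := congrArg (contractR k A g) Q2el
    rw [contractR_map_left, contractR_map_left] at h1
    simpa only [LinearMap.comp_apply, LinearEquiv.coe_coe] using h1
  -- moving maps in and out of contractions
  have mvL_s : ∀ f : Module.Dual k A,
      s (contractL k A f ρ) = contractL k A (f ∘ₗ s.symm.toLinearMap) ρ := by
    intro f
    have h1 := contractL_map_right f s.toLinearMap ρ
    rw [← swE, contractL_map_left] at h1
    simpa using h1.symm
  have mvL_e : ∀ f : Module.Dual k A,
      s.symm (contractL k A f ρ) = contractL k A (f ∘ₗ s.toLinearMap) ρ := by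
    intro f
    have h1 := contractL_map_right f s.symm.toLinearMap ρ
    rw [← swS, contractL_map_left] at h1
    simpa using h1.symm
  have mvR_e : ∀ g : Module.Dual k A,
      s.symm (contractR k A g ρ) = contractR k A (g ∘ₗ s.toLinearMap) ρ := by
    intro g
    have h1 := contractR_map_left g s.symm.toLinearMap ρ
    rw [swE, contractR_map_right] at h1
    simpa using h1.symm
  have mvR_tu : ∀ g : Module.Dual k A,
      tu (contractR k A g ρ) = contractR k A (g ∘ₗ Tu.symm.toLinearMap) ρ := by
    intro g
    have h1 := contractR_map_left g tu ρ
    rw [swTu, contractR_map_right] at h1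
    exact h1.symm
  -- s commutes with Td.symm on left contractions
  have C : ∀ f : Module.Dual k A,
      s (Td.symm (contractL k A f ρ)) = Td.symm (s (contractL k A f ρ)) := by
    intro f
    have hB := P2 (f ∘ₗ s.symm.toLinearMap)
    rw [← mvL_s f] at hB
    have h1 : s.symm (Td.symm (contractL k A f ρ))
        = s.symm (s.symm (Td.symm (s (contractL k A f ρ)))) := (P1 f).symm.trans hB
    have h2 := s.symm.injective h1
    rw [h2, LinearEquiv.apply_symm_apply]
  have C' : ∀ f : Module.Dual k A,
      s.symm (Td.symm (contractL k A f ρ)) = Td.symm (s.symm (contractL k A f ρ)) := by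
    intro f
    have h1 := C (f ∘ₗ s.toLinearMap)
    rw [← mvL_e f] at h1
    rw [LinearEquiv.apply_symm_apply] at h1
    apply s.injective
    rw [LinearEquiv.apply_symm_apply]
    exact h1.symm
  have GoalL : ∀ f : Module.Dual k A,
      td (tu (contractL k A f ρ)) = s.symm (s.symm (contractL k A f ρ)) := by
    intro f
    rw [P2 f, C' f]
    have h1 := C' (f ∘ₗ s.toLinearMap)
    rw [← mvL_e f] at h1
    rw [h1, tdD]
  -- right-contraction side
  have Q2' : ∀ g : Module.Dual k A,
      Tu.symm (contractR k A g ρ) = td (s (s (contractR k A g ρ))) := by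
    intro g
    have h1 := Q2 (g ∘ₗ s.toLinearMap)
    rw [← mvR_e g] at h1
    simp only [LinearEquiv.apply_symm_apply] at h1
    exact h1
  have D : ∀ g : Module.Dual k A,
      s (Tu.symm (contractR k A g ρ)) = Tu.symm (s (contractR k A g ρ)) := by
    intro g
    have h1 := Q1 g
    rw [← Q2' g] at h1
    have h2 := congrArg s h1
    rw [LinearEquiv.apply_symm_apply] at h2
    exact h2.symm
  have D' : ∀ g : Module.Dual k A,
      s.symm (Tu.symm (contractR k A g ρ)) = Tu.symm (s.symm (contractR k A g ρ)) := by
    intro g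
    have h1 := D (g ∘ₗ s.toLinearMap)
    rw [← mvR_e g] at h1
    rw [LinearEquiv.apply_symm_apply] at h1
    apply s.injective
    rw [LinearEquiv.apply_symm_apply]
    exact h1.symm
  have tdR : ∀ g : Module.Dual k A,
      td (contractR k A g ρ) = Tu.symm (s.symm (s.symm (contractR k A g ρ))) := by
    intro g
    have h1 := Q2' ((g ∘ₗ s.toLinearMap) ∘ₗ s.toLinearMap)
    rw [← mvR_e (g ∘ₗ s.toLinearMap), ← mvR_e g] at h1
    simp only [LinearEquiv.apply_symm_apply] at h1
    exact h1.symm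
  have GoalR : ∀ g : Module.Dual k A,
      td (tu (contractR k A g ρ)) = s.symm (s.symm (contractR k A g ρ)) := by
    intro g
    rw [mvR_tu g, tdR (g ∘ₗ Tu.symm.toLinearMap), mvR_e (g ∘ₗ Tu.symm.toLinearMap),
      ← D' ((g ∘ₗ Tu.symm.toLinearMap) ∘ₗ s.toLinearMap),
      ← mvR_e (g ∘ₗ Tu.symm.toLinearMap), ← D' (g ∘ₗ Tu.symm.toLinearMap),
      ← mvR_tu g, tuU]
  -- assemble: the two maps agree on the generating set, hence everywhere
  have hmem : ∀ x ∈ contractSet k A ρ, td (tu x) = s.symm (s.symm x) := by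
    rintro x ⟨f, g, rfl⟩
    rw [map_add, map_add, map_add, map_add, GoalL f, GoalR g]
  let Salg : Subalgebra k A :=
    { carrier := {x | td (tu x) = s.symm (s.symm x)}
      mul_mem' := by
        intro a b ha hb
        simp only [Set.mem_setOf_eq] at ha hb ⊢
        rw [ht.tu_mul, ht.td_mul, ha, hb, s_symm_anti a b, s_symm_anti]
      one_mem' := by
        simp only [Set.mem_setOf_eq]
        rw [ht.tu_one, ht.td_one, s_symm_one, s_symm_one]
      add_mem' := by
        intro a b ha hb
        simp only [Set.mem_setOf_eq] at ha hb ⊢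
        rw [map_add, map_add, map_add, map_add, ha, hb]
      zero_mem' := by
        simp only [Set.mem_setOf_eq]
        rw [map_zero, map_zero, map_zero, map_zero]
      algebraMap_mem' := by
        intro r
        simp only [Set.mem_setOf_eq, Algebra.algebraMap_eq_smul_one]
        rw [map_smul, map_smul, map_smul, map_smul, ht.tu_one, ht.td_one, s_symm_one,
          s_symm_one] }
  have hle : Algebra.adjoin k (contractSet k A ρ) ≤ Salg :=
    Algebra.adjoin_le fun x hx => hmem x hx
  rw [hmin] at hle
  have hall : ∀ x : A, td (tu x) = s.symm (s.symm x) := fun x => hle Algebra.mem_top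
  ext x
  simp only [LinearMap.coe_comp, Function.comp_apply, LinearEquiv.coe_coe,
    LinearEquiv.trans_apply]
  exact hall x
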